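/- For the 3×3 matrix J̃ with rows (-a₁, 0, 0), (x̃/2, -a₂, 1/2), (c₁φ̃/4, c₁φ̃'/2, -b₁), where φ̃ = φ(x̃), φ̃' = φ̃(1-φ̃), and 4a₂b₁x̃ = c₁φ̃, one has det(J̃) = -a₁a₂b₁[1 - x̃(1-φ̃)] and this determinant is strictly negative (since x̃(1-φ̃) < 1 for all real x̃). -/

import Mathlib

noncomputable def phi (z : ℝ) : ℝ := 1 / (1 + Real.exp (-z))

lemma xt_one_sub_phi_lt_one (x : ℝ) : x * (1 - phi x) < 1 := by
  have hE : 0 < Real.exp (-x) := Real.exp_pos _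
  have h1 : (0:ℝ) < 1 + Real.exp (-x) := by linarith
  have hphi : 1 - phi x = Real.exp (-x) / (1 + Real.exp (-x)) := by
    unfold phi
    field_simp
    ring
  rw [hphi]
  have key : x * Real.exp (-x) < 1 + Real.exp (-x) := by
      have h3 : x + 1 ≤ Real.exp x := Real.add_one_le_exp x
      have h4 : Real.exp x * Real.exp (-x) = 1 := by
        rw [← Real.exp_add]; simp
      nlinarith [hE, h3]
  calc x * (Real.exp (-x) / (1 + Real.exp (-x)))
      = x * Real.exp (-x) / (1 + Real.exp (-x)) := by ring
    _ < 1 := by rw [div_lt_one h1]; linarith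

/-- Determinant of the Jacobian of the one-synapse minimal RNN-HL model at its
unique equilibrium: det(J̃) = -a₁a₂b₁[1 - x̃(1-φ̃)] < 0. -/
theorem one_synapse_jacobian_det (a₁ a₂ b₁ c₁ xt : ℝ)
    (ha₁ : 0 < a₁) (ha₂ : 0 < a₂) (hb₁ : 0 < b₁) (hc₁ : c₁ ≠ 0)
    (hx : 4 * a₂ * b₁ * xt = c₁ * phi xt) :
    Matrix.det !![-a₁, 0, 0;
                  xt / 2, -a₂, 1 / 2;
                  c₁ * phi xt / 4, c₁ * (phi xt * (1 - phi xt)) / 2, -b₁]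
        = -(a₁ * a₂ * b₁) * (1 - xt * (1 - phi xt)) ∧
    Matrix.det !![-a₁, 0, 0;
                  xt / 2, -a₂, 1 / 2;
                  c₁ * phi xt / 4, c₁ * (phi xt * (1 - phi xt)) / 2, -b₁] < 0 := by
  have hdet : Matrix.det !![-a₁, 0, 0;
                  xt / 2, -a₂, 1 / 2;
                  c₁ * phi xt / 4, c₁ * (phi xt * (1 - phi xt)) / 2, -b₁]
        = -(a₁ * a₂ * b₁) * (1 - xt * (1 - phi xt)) := by
    simp [Matrix.det_fin_three]
    linear_combination (-(a₁ * (1 - phi xt)) / 4) * hx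
  refine ⟨hdet, ?_⟩
  rw [hdet]
  have h := xt_one_sub_phi_lt_one xt
  have : 0 < a₁ * a₂ * b₁ := by positivity
  nlinarith
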